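/- Let A be an algebraic algebra over an algebraically closed field F with no nontrivial left zero-divisors. Then A is one-dimensional, hence isomorphic to F. -/

import Mathlib

open Polynomial in
lemma evalDetAux {F : Type*} [Field F] {n : ℕ} (N K : Matrix (Fin n) (Fin n) F) (t : F) :
    Polynomial.eval t (Matrix.det (N.map Polynomial.C + (Polynomial.X : F[X]) • K.map Polynomial.C))
      = (N + t • K).det := by
  rw [show Polynomial.eval t (Matrix.det (N.map Polynomial.C + (Polynomial.X : F[X]) • K.map Polynomial.C))
      = (Polynomial.evalRingHom t) (Matrix.det (N.map Polynomial.C + (Polynomial.X : F[X]) • K.map Polynomial.C)) from rfl,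
    RingHom.map_det]
  congr 1
  ext i j
  simp only [RingHom.mapMatrix_apply, Matrix.map_apply, Matrix.map_add, Matrix.add_apply,
    Matrix.smul_apply, smul_eq_mul, coe_evalRingHom, eval_add, eval_mul, eval_X, eval_C]


open Polynomial in
lemma sq_smul_aux {F A : Type*} [Field F] [IsAlgClosed F]
    [NonUnitalNonAssocRing A]
    [Module F A] [SMulCommClass F A A] [IsScalarTower F A A]
    (halg : ∀ a : A, FiniteDimensional F (NonUnitalAlgebra.adjoin F {a}))
    (hlzd : ∀ a b : A, a ≠ 0 → a * b = 0 → b = 0)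
    (a : A) (ha : a ≠ 0) : ∃ c : F, c ≠ 0 ∧ a * a = c • a := by
  by_cases h : ∃ c : F, a * a = c • a
  · obtain ⟨c, hc⟩ := h
    refine ⟨c, ?_, hc⟩
    rintro rfl
    rw [zero_smul] at hc
    exact ha (hlzd a a ha hc)
  exfalso
  push_neg at h
  set B := NonUnitalAlgebra.adjoin F ({a} : Set A) with hB
  haveI : FiniteDimensional F B := halg a
  set x : B := ⟨a, NonUnitalAlgebra.self_mem_adjoin_singleton F a⟩ with hxdef
  have hxa : (x : A) = a := rfl
  have hx0 : x ≠ 0 := fun hc => ha (by rw [← hxa, hc]; rfl)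
  haveI : Nontrivial B := nontrivial_of_ne x 0 hx0
  -- nonvanishing of combinations
  have hcomb : ∀ s t : F, (s ≠ 0 ∨ t ≠ 0) → s • x + t • (x * x) ≠ 0 := by
    intro s t hst h0
    have h0' : s • a + t • (a * a) = 0 := by
      have := congrArg (Subtype.val) h0
      simpa using this
    rcases eq_or_ne t 0 with rfl | ht
    · rcases hst with hs | hs
      · rw [zero_smul, add_zero] at h0'
        exact ha (by simpa [smul_eq_zero, hs] using h0')
      · exact hs rfl
    · refine h (-(t⁻¹*s)) (smul_right_injective A ht ?_)
      have hts : t * (-(t⁻¹*s)) = -s := by field_simp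
      show t • (a * a) = t • ((-(t⁻¹*s)) • a)
      rw [smul_smul, hts]
      linear_combination (norm := module) h0'
  -- determinants of left multiplications are nonzero
  have hdet : ∀ y : B, y ≠ 0 → LinearMap.det (LinearMap.mulLeft F y) ≠ 0 := by
    intro y hy hd
    obtain ⟨z, hz, hz0⟩ := Submodule.exists_mem_ne_zero_of_ne_bot
      (LinearMap.bot_lt_ker_of_det_eq_zero hd).ne'
    have : (y : A) * (z : A) = 0 := by
      have : y * z = 0 := hz
      exact_mod_cast congrArg Subtype.val this
    have hy' : (y : A) ≠ 0 := fun hc => hy (ZeroMemClass.coe_eq_zero.mp hc)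
    exact hz0 (Subtype.ext (hlzd _ _ hy' this))
  classical
  set n := Module.finrank F B with hn
  have hnpos : 0 < n := Module.finrank_pos
  let bb : Module.Basis (Fin n) F B := Module.finBasis F B
  set N : Matrix (Fin n) (Fin n) F :=
    LinearMap.toMatrix bb bb (LinearMap.mulLeft F x) with hN
  set K : Matrix (Fin n) (Fin n) F :=
    LinearMap.toMatrix bb bb (LinearMap.mulLeft F (x * x)) with hK
  have hlin : ∀ s t : F, s • N + t • K
      = LinearMap.toMatrix bb bb (LinearMap.mulLeft F (s • x + t • (x * x))) := by
    intro s t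
    have hml : LinearMap.mulLeft F (s • x + t • (x * x))
        = s • LinearMap.mulLeft F x + t • LinearMap.mulLeft F (x * x) := by
      ext z
      simp [add_mul, smul_mul_assoc]
    rw [hml, map_add, map_smul, map_smul]
  have hdet' : ∀ s t : F, (s ≠ 0 ∨ t ≠ 0) → (s • N + t • K).det ≠ 0 := by
    intro s t hst
    rw [hlin, LinearMap.det_toMatrix]
    exact hdet _ (hcomb s t hst)
  set P : Polynomial F := Matrix.det (N.map Polynomial.C + (Polynomial.X : Polynomial F) • K.map Polynomial.C) with hP
  set Q : Polynomial F := Matrix.det (K.map Polynomial.C + (Polynomial.X : Polynomial F) • N.map Polynomial.C) with hQ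
  have hPe : ∀ t : F, P.eval t = (N + t • K).det := fun t => evalDetAux N K t
  have hQe : ∀ t : F, Q.eval t = (K + t • N).det := fun t => evalDetAux K N t
  have hPne : ∀ t : F, P.eval t ≠ 0 := by
    intro t
    rw [hPe t]
    have := hdet' 1 t (Or.inl one_ne_zero)
    rwa [one_smul] at this
  have hQne : ∀ t : F, Q.eval t ≠ 0 := by
    intro t
    rw [hQe t]
    have := hdet' t 1 (Or.inr one_ne_zero)
    rwa [one_smul, add_comm] at this
  have hPdeg : P.degree = 0 := by
    by_contra hdg
    obtain ⟨t, ht⟩ := IsAlgClosed.exists_root P hdg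
    exact hPne t ht
  have hQdeg : Q.degree = 0 := by
    by_contra hdg
    obtain ⟨t, ht⟩ := IsAlgClosed.exists_root Q hdg
    exact hQne t ht
  have hPC : P = Polynomial.C (P.coeff 0) := Polynomial.eq_C_of_degree_le_zero hPdeg.le
  have hQC : Q = Polynomial.C (Q.coeff 0) := Polynomial.eq_C_of_degree_le_zero hQdeg.le
  set d := P.coeff 0 with hdd
  set c := Q.coeff 0 with hcc
  have hd0 : d ≠ 0 := by
    have := hPne 0
    rw [hPC] at this
    simpa using this
  have hkey : ∀ s : F, s ≠ 0 → s ^ n * d = c := by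
    intro s hs
    have h1 : Q.eval s = c := by rw [hQC]; simp
    have h2 : P.eval s⁻¹ = d := by rw [hPC]; simp
    rw [hQe] at h1
    rw [hPe] at h2
    have h3 : K + s • N = s • (N + s⁻¹ • K) := by
      rw [smul_add, smul_smul, mul_inv_cancel₀ hs, one_smul, add_comm]
    rw [h3, Matrix.det_smul, Fintype.card_fin, h2] at h1
    exact h1
  obtain ⟨w, hw⟩ := Infinite.exists_notMem_finset ({0, c * d⁻¹} : Finset F)
  simp only [Finset.mem_insert, Finset.mem_singleton, not_or] at hw
  obtain ⟨z, hz⟩ := IsAlgClosed.exists_pow_nat_eq w hnpos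
  have hz0 : z ≠ 0 := by
    rintro rfl
    rw [zero_pow hnpos.ne'] at hz
    exact hw.1 hz.symm
  have hzz := hkey z hz0
  rw [hz] at hzz
  exact hw.2 (by field_simp; exact hzz)

/-- An algebraic algebra over an algebraically closed field with no nontrivial
left zero-divisors is one-dimensional. -/
theorem algebraic_algClosed_noLeftZeroDivisors_oneDimensional
    {F A : Type*} [Field F] [IsAlgClosed F]
    [NonUnitalNonAssocRing A] [Nontrivial A]
    [Module F A] [SMulCommClass F A A] [IsScalarTower F A A]
    (halg : ∀ a : A, FiniteDimensional F (NonUnitalAlgebra.adjoin F {a}))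
    (hlzd : ∀ a b : A, a ≠ 0 → a * b = 0 → b = 0) :
    Module.rank F A = 1 := by
  classical
  obtain ⟨a, ha⟩ := exists_ne (0 : A)
  refine rank_eq_one a ha ?_
  intro w
  by_contra hc
  push_neg at hc
  have hw : w ≠ 0 := by
    intro h0
    exact hc 0 (by simp [h0])
  obtain ⟨α, hα0, hα⟩ := sq_smul_aux halg hlzd a ha
  obtain ⟨β, hβ0, hβ⟩ := sq_smul_aux halg hlzd w hw
  have hind : ∀ p q : F, p • a + q • w = 0 → p = 0 ∧ q = 0 := by
    intro p q hpq
    rcases eq_or_ne q 0 with rfl | hq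
    · rw [zero_smul, add_zero] at hpq
      have hp : p = 0 := by
        by_contra hp
        exact ha (by simpa [smul_eq_zero, hp] using hpq)
      exact ⟨hp, rfl⟩
    · exfalso
      apply hc (-(q⁻¹ * p))
      refine smul_right_injective A hq ?_
      show q • ((-(q⁻¹ * p)) • a) = q • w
      have hqp : q * (-(q⁻¹ * p)) = -p := by field_simp
      rw [smul_smul, hqp]
      linear_combination (norm := module) -hpq
  have hne : ∀ t : F, a + t • w ≠ 0 := by
    intro t h0
    rcases eq_or_ne t 0 with rfl | ht
    · rw [zero_smul, add_zero] at h0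
      exact ha h0
    · apply hc (-t⁻¹)
      refine smul_right_injective A ht ?_
      show t • ((-t⁻¹) • a) = t • w
      have hqp : t * (-t⁻¹) = -1 := by field_simp
      rw [smul_smul, hqp]
      linear_combination (norm := module) -h0
  have h1 : a + w ≠ 0 := by
    have := hne 1
    rwa [one_smul] at this
  obtain ⟨γ, hγ0, hγ⟩ := sq_smul_aux halg hlzd (a + w) h1
  have hexp : ∀ t : F, (a + t • w) * (a + t • w)
      = a * a + t • (a * w) + t • (w * a) + (t * t) • (w * w) := by
    intro t
    simp only [mul_add, add_mul, smul_mul_assoc, mul_smul_comm, smul_smul]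
    module
  have hγ' : (a + (1:F) • w) * (a + (1:F) • w) = γ • (a + (1:F) • w) := by
    rw [one_smul]; exact hγ
  have hcross : a * w + w * a = (γ - α) • a + (γ - β) • w := by
    linear_combination (norm := module) hγ' - hexp 1 - hα - hβ
  have hrel : ∀ t : F, t ≠ 0 → ∀ δ : F, (a + t • w) * (a + t • w) = δ • (a + t • w) →
      δ = α + t * (γ - α) ∧ δ * t = t * (γ - β) + t * t * β := by
    intro t ht δ hδ
    have e1 : (α + t * (γ - α) - δ) • a + ((t * (γ - β) + t * t * β) - δ * t) • w = 0 := by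
      linear_combination (norm := module) hδ - hexp t - hα - t • hcross - (t * t) • hβ
    obtain ⟨e2, e3⟩ := hind _ _ e1
    exact ⟨(sub_eq_zero.mp e2).symm, (sub_eq_zero.mp e3).symm⟩
  obtain ⟨t₁, ht₁⟩ := Infinite.exists_notMem_finset ({0, 1} : Finset F)
  simp only [Finset.mem_insert, Finset.mem_singleton, not_or] at ht₁
  obtain ⟨δ₁, hδ₁0, hδ₁⟩ := sq_smul_aux halg hlzd (a + t₁ • w) (hne t₁)
  obtain ⟨e4, e5⟩ := hrel t₁ ht₁.1 δ₁ hδ₁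
  have e5' : δ₁ = (γ - β) + t₁ * β := by
    refine mul_right_cancel₀ ht₁.1 ?_
    linear_combination e5
  have hγab : γ = α + β := by
    have hz : (γ - α - β) * (t₁ - 1) = 0 := by linear_combination e5' - e4
    rcases mul_eq_zero.mp hz with hzz | hzz
    · linear_combination hzz
    · exact absurd (by linear_combination hzz) ht₁.2
  set t₀ : F := -(β⁻¹ * α) with ht₀def
  have ht₀ : t₀ ≠ 0 :=
    neg_ne_zero.mpr (mul_ne_zero (inv_ne_zero hβ0) hα0)
  obtain ⟨δ₀, hδ₀0, hδ₀⟩ := sq_smul_aux halg hlzd (a + t₀ • w) (hne t₀)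
  obtain ⟨e6, -⟩ := hrel t₀ ht₀ δ₀ hδ₀
  apply hδ₀0
  rw [e6, hγab, ht₀def]
  field_simp; ring
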